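/- arXiv:2007.13804 — 5 statements merged into one kernel-verified Lean document; each statement's English description precedes it below -/
import Mathlib

section
/- Let M be an m×m matrix function in the Wiener algebra on 𝕋 with det M(z) ≠ 0 for all z ∈ 𝕋, admitting a Wiener-Hopf factorization M = M₊ M₀ M₋ where M₊, M₊⁻¹ have absolutely summable Fourier coefficients supported on nonnegative powers of z, M₋, M₋⁻¹ likewise on nonpositive powers, and M₀ = diag(z^{κ₁},…,z^{κ_m}) with integers κ₁ ≥ ⋯ ≥ κ_m. If all partial indices κ_i are nonnegative, then the operator 𝐌 : (H₀)^m → (H₀)^m, 𝐌φ = P(Mφ | (H₀)^m), is surjective, and a right inverse is given by 𝐌₋⁻¹ 𝐌₀⁽⁻¹⁾ 𝐌₊⁻¹, where 𝐌₀⁽⁻¹⁾ is the diagonal operator with entries V^{(−κ_i)} (the κ_i-fold composition of φ ↦ z^{-1}φ). -/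
open MeasureTheory Filter Complex Topology
open scoped Real ENNReal

noncomputable section

instance : Fact (0 < 2 * Real.pi) := ⟨by positivity⟩

local notation "𝕋" => AddCircle (2 * Real.pi)

/-- The Hardy-type space `H₀` relative to a finite spectral measure on the circle. -/
def Hzero (μ : Measure 𝕋) [IsFiniteMeasure μ] : Submodule ℂ (Lp ℂ 2 μ) :=
  (Submodule.span ℂ
    (Set.range fun s : ℕ => ContinuousMap.toLp 2 μ ℂ (fourier (-(s : ℤ))))).topologicalClosure

instance (μ : Measure 𝕋) [IsFiniteMeasure μ] : CompleteSpace (Hzero μ) :=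
  (Submodule.isClosed_topologicalClosure _).completeSpace_coe

/-- The matrix symbol on the circle defined by a family of Fourier coefficients. -/
def symb (m : ℕ) (A : ℤ → Matrix (Fin m) (Fin m) ℂ) (x : 𝕋) :
    Matrix (Fin m) (Fin m) ℂ :=
  Matrix.of fun i j => ∑' s : ℤ, A s i j * fourier s x

section
open BoundedContinuousFunction
namespace WHaux

set_option linter.unusedSectionVars false

variable {μ : Measure 𝕋} [IsFiniteMeasure μ]


variable {μ : Measure 𝕋} [IsFiniteMeasure μ]

lemma memlp_mul (f : 𝕋 →ᵇ ℂ) (g : Lp ℂ 2 μ) :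
    MemLp (fun x => f x * g x) 2 μ := by
  have hf : MemLp (⇑f) ∞ μ :=
    memLp_top_of_bound f.continuous.aestronglyMeasurable ‖f‖
      (Filter.Eventually.of_forall fun x => f.norm_coe_le_norm x)
  have := (Lp.memLp g).mul' (r := 2) hf
  exact this

/-- Multiplication of an `L²` function by a bounded continuous function. -/
def mulLp (f : 𝕋 →ᵇ ℂ) (g : Lp ℂ 2 μ) : Lp ℂ 2 μ :=
  (memlp_mul f g).toLp _

lemma coeFn_mulLp (f : 𝕋 →ᵇ ℂ) (g : Lp ℂ 2 μ) :
    ⇑(mulLp f g) =ᵐ[μ] fun x => f x * g x :=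
  MemLp.coeFn_toLp _

lemma norm_mulLp_le (f : 𝕋 →ᵇ ℂ) (g : Lp ℂ 2 μ) :
    ‖mulLp f g‖ ≤ ‖f‖ * ‖g‖ := by
  rw [Lp.norm_def, Lp.norm_def]
  rw [eLpNorm_congr_ae (coeFn_mulLp f g)]
  have h1 : eLpNorm (fun x => f x * g x) 2 μ ≤ eLpNorm (⇑f) ∞ μ * eLpNorm (⇑g) 2 μ := by
    exact
      eLpNorm_smul_le_eLpNorm_top_mul_eLpNorm 2 (Lp.aestronglyMeasurable g) (⇑f)
  have h2 : eLpNorm (⇑f) ∞ μ ≤ ENNReal.ofReal ‖f‖ := by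
    simpa using eLpNorm_le_of_ae_bound (μ := μ) (p := ∞)
      (Filter.Eventually.of_forall fun x => f.norm_coe_le_norm x)
  calc (eLpNorm (fun x => f x * g x) 2 μ).toReal
      ≤ (ENNReal.ofReal ‖f‖ * eLpNorm (⇑g) 2 μ).toReal := by
        apply ENNReal.toReal_mono
        · exact ENNReal.mul_ne_top ENNReal.ofReal_ne_top (Lp.eLpNorm_ne_top g)
        · exact h1.trans (mul_le_mul_left h2 _)
    _ = ‖f‖ * (eLpNorm (⇑g) 2 μ).toReal := by
        rw [ENNReal.toReal_mul, ENNReal.toReal_ofReal (norm_nonneg f)]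

set_option linter.unusedSectionVars false

lemma mulLp_add_right (f : 𝕋 →ᵇ ℂ) (g h : Lp ℂ 2 μ) :
    mulLp f (g + h) = mulLp f g + mulLp f h := by
  apply Lp.ext
  filter_upwards [coeFn_mulLp f (g + h), coeFn_mulLp f g, coeFn_mulLp f h,
    Lp.coeFn_add g h, Lp.coeFn_add (mulLp f g) (mulLp f h)] with x h1 h2 h3 h4 h5
  simp only [h1, h2, h3, h4, h5, Pi.add_apply]; ring

lemma mulLp_smul_right (f : 𝕋 →ᵇ ℂ) (c : ℂ) (g : Lp ℂ 2 μ) :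
    mulLp f (c • g) = c • mulLp f g := by
  apply Lp.ext
  filter_upwards [coeFn_mulLp f (c • g), coeFn_mulLp f g,
    Lp.coeFn_smul c g, Lp.coeFn_smul c (mulLp f g)] with x h1 h2 h3 h4
  simp only [h1, h2, h3, h4, Pi.smul_apply, smul_eq_mul]; ring

lemma mulLp_add_left (f g : 𝕋 →ᵇ ℂ) (u : Lp ℂ 2 μ) :
    mulLp (f + g) u = mulLp f u + mulLp g u := by
  apply Lp.ext
  filter_upwards [coeFn_mulLp (f + g) u, coeFn_mulLp f u, coeFn_mulLp g u,
    Lp.coeFn_add (mulLp f u) (mulLp g u)] with x h1 h2 h3 h4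
  simp only [h1, h2, h3, h4, Pi.add_apply, BoundedContinuousFunction.coe_add]; ring

lemma mulLp_smul_left (c : ℂ) (f : 𝕋 →ᵇ ℂ) (u : Lp ℂ 2 μ) :
    mulLp (c • f) u = c • mulLp f u := by
  apply Lp.ext
  filter_upwards [coeFn_mulLp (c • f) u, coeFn_mulLp f u,
    Lp.coeFn_smul c (mulLp f u)] with x h1 h2 h3
  simp only [h1, h2, h3, Pi.smul_apply, smul_eq_mul, BoundedContinuousFunction.smul_apply]; ring

lemma mulLp_one (u : Lp ℂ 2 μ) : mulLp 1 u = u := by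
  apply Lp.ext
  filter_upwards [coeFn_mulLp 1 u] with x h1
  simp only [h1, BoundedContinuousFunction.coe_one, Pi.one_apply, one_mul]

lemma mulLp_mul (f g : 𝕋 →ᵇ ℂ) (u : Lp ℂ 2 μ) :
    mulLp (f * g) u = mulLp f (mulLp g u) := by
  apply Lp.ext
  filter_upwards [coeFn_mulLp (f * g) u, coeFn_mulLp g u,
    coeFn_mulLp f (mulLp g u)] with x h1 h2 h3
  rw [h1, h3, h2, show (f * g) x = f x * g x from rfl]; ring

lemma mulLp_sum_right (f : 𝕋 →ᵇ ℂ) {ι : Type*} (s : Finset ι) (g : ι → Lp ℂ 2 μ) :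
    mulLp f (∑ i ∈ s, g i) = ∑ i ∈ s, mulLp f (g i) := by
  classical
  induction s using Finset.induction with
  | empty =>
      apply Lp.ext
      filter_upwards [coeFn_mulLp f 0, Lp.coeFn_zero (E := ℂ) (p := 2) (μ := μ)] with x h1 h2
      simp only [Finset.sum_empty] at *
      simp only [h1, h2, Pi.zero_apply, mul_zero]
  | insert _ _ hni ih => simp [Finset.sum_insert hni, mulLp_add_right, ih]

/-- Multiplication by a fixed bounded continuous function as a CLM on `L²`. -/
def mulCLM (f : 𝕋 →ᵇ ℂ) : Lp ℂ 2 μ →L[ℂ] Lp ℂ 2 μ :=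
  LinearMap.mkContinuous
    { toFun := mulLp f
      map_add' := mulLp_add_right f
      map_smul' := fun c g => mulLp_smul_right f c g } ‖f‖
    (fun g => norm_mulLp_le f g)

@[simp] lemma mulCLM_apply (f : 𝕋 →ᵇ ℂ) (g : Lp ℂ 2 μ) : mulCLM f g = mulLp f g := rfl

/-- Multiplication acting on a fixed `L²` function, as a CLM in the symbol. -/
def mulCLM' (g : Lp ℂ 2 μ) : (𝕋 →ᵇ ℂ) →L[ℂ] Lp ℂ 2 μ :=
  LinearMap.mkContinuous
    { toFun := fun f => mulLp f g
      map_add' := fun f f' => mulLp_add_left f f' g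
      map_smul' := fun c f => mulLp_smul_left c f g } ‖g‖
    (fun f => (norm_mulLp_le f g).trans (le_of_eq (mul_comm _ _)))

@[simp] lemma mulCLM'_apply (g : Lp ℂ 2 μ) (f : 𝕋 →ᵇ ℂ) : mulCLM' g f = mulLp f g := rfl

/-- `fourier t` as a bounded continuous function. -/
def fB (t : ℤ) : 𝕋 →ᵇ ℂ := BoundedContinuousFunction.mkOfCompact (fourier t)

@[simp] lemma fB_apply (t : ℤ) (x : 𝕋) : fB t x = fourier t x := rfl

lemma norm_fourier_apply (t : ℤ) (x : 𝕋) : ‖fourier t x‖ = 1 := by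
  rw [fourier_apply, Circle.norm_coe]

lemma norm_fB_le (t : ℤ) : ‖fB t‖ ≤ 1 :=
  (BoundedContinuousFunction.norm_le zero_le_one).mpr fun x => le_of_eq (norm_fourier_apply t x)

lemma fB_mul (a b : ℤ) : fB a * fB b = fB (a + b) := by
  ext x
  rw [show (fB a * fB b) x = fB a x * fB b x from rfl]
  simp only [fB_apply]
  exact (fourier_add).symm

lemma fB_zero : fB 0 = 1 := by
  ext x
  rw [fB_apply, fourier_zero]
  rfl

lemma star_fB (t : ℤ) : star (fB t) = fB (-t) := by
  ext x
  rw [BoundedContinuousFunction.star_apply, fB_apply, fB_apply, fourier_neg]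
  rfl

/-- The bounded continuous function with Fourier coefficients `A`. -/
def FA (A : ℤ → ℂ) : 𝕋 →ᵇ ℂ := ∑' t, A t • fB t

lemma FA_summable {A : ℤ → ℂ} (hA : Summable fun t => ‖A t‖) :
    Summable fun t => A t • fB t := by
  apply Summable.of_norm_bounded hA
  intro t
  rw [norm_smul]
  calc ‖A t‖ * ‖fB t‖ ≤ ‖A t‖ * 1 :=
        mul_le_mul_of_nonneg_left (norm_fB_le t) (norm_nonneg _)
    _ = ‖A t‖ := mul_one _

lemma FA_hasSum {A : ℤ → ℂ} (hA : Summable fun t => ‖A t‖) :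
    HasSum (fun t => A t • fB t) (FA A) :=
  (FA_summable hA).hasSum

lemma FA_apply {A : ℤ → ℂ} (hA : Summable fun t => ‖A t‖) (x : 𝕋) :
    FA A x = ∑' t, A t * fourier t x := by
  have h := (FA_hasSum hA).mapL (BoundedContinuousFunction.evalCLM (𝕜 := ℂ) (β := ℂ) x)
  exact (HasSum.tsum_eq h).symm

lemma hasSum_mulLp_FA {A : ℤ → ℂ} (hA : Summable fun t => ‖A t‖) (g : Lp ℂ 2 μ) :
    HasSum (fun t => A t • mulLp (fB t) g) (mulLp (FA A) g) := by
  have h := (FA_hasSum hA).mapL (mulCLM' g)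
  convert h using 2 with t
  exact ((mulCLM' g).map_smul (A t) (fB t)).symm
  rfl

lemma toLp_fourier_mem_Hzero (s : ℕ) :
    ContinuousMap.toLp 2 μ ℂ (fourier (-(s : ℤ))) ∈ Hzero μ :=
  Submodule.le_topologicalClosure _ (Submodule.subset_span ⟨s, rfl⟩)

lemma mulLp_fB_toLp (t s : ℤ) :
    mulLp (fB t) (ContinuousMap.toLp 2 μ ℂ (fourier s)) =
      ContinuousMap.toLp 2 μ ℂ (fourier (t + s)) := by
  apply Lp.ext
  filter_upwards [coeFn_mulLp (fB t) (ContinuousMap.toLp 2 μ ℂ (fourier s)),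
    ContinuousMap.coeFn_toLp (p := 2) (μ := μ) (𝕜 := ℂ) (fourier s),
    ContinuousMap.coeFn_toLp (p := 2) (μ := μ) (𝕜 := ℂ) (fourier (t + s))] with x h1 h2 h3
  rw [h3, h1, h2, fB_apply, ← fourier_add]

lemma mulLp_fB_mem (t : ℤ) (ht : t ≤ 0) {g : Lp ℂ 2 μ} (hg : g ∈ Hzero μ) :
    mulLp (fB t) g ∈ Hzero μ := by
  set K : Submodule ℂ (Lp ℂ 2 μ) :=
    (Hzero μ).comap ((mulCLM (fB t)).toLinearMap) with hKdef
  have hK : IsClosed (K : Set (Lp ℂ 2 μ)) := by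
    have : (K : Set (Lp ℂ 2 μ)) =
        (fun u => mulCLM (fB t) u) ⁻¹' (Hzero μ : Set (Lp ℂ 2 μ)) := rfl
    rw [this]
    exact IsClosed.preimage (mulCLM (fB t)).continuous
      (Submodule.isClosed_topologicalClosure _)
  have hspan : Submodule.span ℂ
      (Set.range fun s : ℕ => ContinuousMap.toLp 2 μ ℂ (fourier (-(s : ℤ)))) ≤ K := by
    rw [Submodule.span_le]
    rintro _ ⟨s, rfl⟩
    show mulLp (fB t) (ContinuousMap.toLp 2 μ ℂ (fourier (-(s : ℤ)))) ∈ Hzero μ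
    rw [mulLp_fB_toLp]
    have h : t + -(s : ℤ) = -(((s + (-t).toNat : ℕ) : ℤ)) := by push_cast; omega
    rw [h]
    exact toLp_fourier_mem_Hzero _
  exact Submodule.topologicalClosure_minimal _ hspan hK hg

lemma mem_Hzero_mulLp_FA {A : ℤ → ℂ} (hA : Summable fun t => ‖A t‖)
    (hsupp : ∀ t : ℤ, 0 < t → A t = 0) {g : Lp ℂ 2 μ} (hg : g ∈ Hzero μ) :
    mulLp (FA A) g ∈ Hzero μ := by
  have hs := hasSum_mulLp_FA hA g
  have hmem : ∀ s : Finset ℤ, ∑ t ∈ s, A t • mulLp (fB t) g ∈ Hzero μ := by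
    intro s
    refine Submodule.sum_mem _ fun t _ => ?_
    by_cases h : 0 < t
    · rw [hsupp t h, zero_smul]; exact Submodule.zero_mem _
    · exact Submodule.smul_mem _ _ (mulLp_fB_mem t (not_lt.1 h) hg)
  exact (Submodule.isClosed_topologicalClosure _).mem_of_tendsto hs
    (Filter.Eventually.of_forall hmem)

lemma inner_mulLp (f : 𝕋 →ᵇ ℂ) (u v : Lp ℂ 2 μ) :
    (inner ℂ u (mulLp f v) : ℂ) = inner ℂ (mulLp (star f) u) v := by
  rw [MeasureTheory.L2.inner_def, MeasureTheory.L2.inner_def]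
  apply integral_congr_ae
  filter_upwards [coeFn_mulLp f v, coeFn_mulLp (star f) u] with x h1 h2
  rw [h1, h2]
  simp only [RCLike.inner_apply, starRingEnd_apply, BoundedContinuousFunction.star_apply,
    star_mul']
  rw [star_star]
  ring

lemma mulLp_fB_mem_orth (t : ℤ) (ht : 0 ≤ t) {g : Lp ℂ 2 μ} (hg : g ∈ (Hzero μ)ᗮ) :
    mulLp (fB t) g ∈ (Hzero μ)ᗮ := by
  rw [Submodule.mem_orthogonal]
  intro v hv
  rw [inner_mulLp, star_fB]
  exact (Submodule.mem_orthogonal (Hzero μ) g).mp hg _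
    (mulLp_fB_mem (-t) (neg_nonpos.mpr ht) hv)

lemma mem_orth_mulLp_FA {A : ℤ → ℂ} (hA : Summable fun t => ‖A t‖)
    (hsupp : ∀ t : ℤ, t < 0 → A t = 0) {g : Lp ℂ 2 μ} (hg : g ∈ (Hzero μ)ᗮ) :
    mulLp (FA A) g ∈ (Hzero μ)ᗮ := by
  have hs := hasSum_mulLp_FA hA g
  have hmem : ∀ s : Finset ℤ, ∑ t ∈ s, A t • mulLp (fB t) g ∈ (Hzero μ)ᗮ := by
    intro s
    refine Submodule.sum_mem _ fun t _ => ?_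
    by_cases h : t < 0
    · rw [hsupp t h, zero_smul]; exact Submodule.zero_mem _
    · exact Submodule.smul_mem _ _ (mulLp_fB_mem_orth t (not_lt.1 h) hg)
  exact (Submodule.isClosed_orthogonal _).mem_of_tendsto hs
    (Filter.Eventually.of_forall hmem)
lemma mulLp_zero_left (u : Lp ℂ 2 μ) : mulLp (0 : 𝕋 →ᵇ ℂ) u = 0 :=
  (mulCLM' u).map_zero

lemma mulLp_sub_right (f : 𝕋 →ᵇ ℂ) (g h : Lp ℂ 2 μ) :
    mulLp f (g - h) = mulLp f g - mulLp f h :=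
  (mulCLM f).map_sub g h

lemma mulLp_sum_left {ι : Type*} (s : Finset ι) (f : ι → 𝕋 →ᵇ ℂ) (u : Lp ℂ 2 μ) :
    mulLp (∑ i ∈ s, f i) u = ∑ i ∈ s, mulLp (f i) u := by
  have := map_sum (mulCLM' u) f s
  simpa only [mulCLM'_apply] using this

lemma coeFn_sum_mulLp {ι : Type*} (s : Finset ι) (f : ι → 𝕋 →ᵇ ℂ) (g : ι → Lp ℂ 2 μ) :
    ⇑(∑ i ∈ s, mulLp (f i) (g i)) =ᵐ[μ] fun x => ∑ i ∈ s, f i x * (g i : Lp ℂ 2 μ) x := by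
  classical
  induction s using Finset.induction with
  | empty =>
      simp only [Finset.sum_empty]
      filter_upwards [Lp.coeFn_zero (E := ℂ) (p := 2) (μ := μ)] with x hx
      simpa using hx
  | insert _ _ hni ih =>
      rename_i i s
      rw [Finset.sum_insert hni]
      filter_upwards [Lp.coeFn_add (mulLp (f i) (g i)) (∑ j ∈ s, mulLp (f j) (g j)),
        coeFn_mulLp (f i) (g i), ih] with x h1 h2 h3
      rw [h1, Pi.add_apply, h2, h3, Finset.sum_insert hni]
end WHaux
end

set_option maxHeartbeats 2000000 in
open scoped BoundedContinuousFunction in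
/-- Wiener-Hopf factorization with nonnegative partial indices: `𝐌` is surjective on
`H₀^m` with right inverse `𝐌₋⁻¹ 𝐌₀⁽⁻¹⁾ 𝐌₊⁻¹`. -/
theorem wiener_hopf_right_inverse (μ : Measure 𝕋) [IsFiniteMeasure μ] (m : ℕ)
    (Mc Mpc Mpic Mmc Mmic : ℤ → Matrix (Fin m) (Fin m) ℂ) (κ : Fin m → ℤ)
    (hMc : ∀ i j, Summable fun s => ‖Mc s i j‖)
    (hMpc : ∀ i j, Summable fun s => ‖Mpc s i j‖)
    (hMpic : ∀ i j, Summable fun s => ‖Mpic s i j‖)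
    (hMmc : ∀ i j, Summable fun s => ‖Mmc s i j‖)
    (hMmic : ∀ i j, Summable fun s => ‖Mmic s i j‖)
    (hp_supp : ∀ s : ℤ, s < 0 → Mpc s = 0)
    (hpi_supp : ∀ s : ℤ, s < 0 → Mpic s = 0)
    (hm_supp : ∀ s : ℤ, 0 < s → Mmc s = 0)
    (hmi_supp : ∀ s : ℤ, 0 < s → Mmic s = 0)
    (hdet : ∀ x : 𝕋, (symb m Mc x).det ≠ 0)
    (hord : ∀ i j : Fin m, i ≤ j → κ j ≤ κ i)
    (hκ : ∀ i, 0 ≤ κ i)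
    (hfact : ∀ x : 𝕋, symb m Mc x =
      symb m Mpc x * (Matrix.diagonal fun i => fourier (κ i) x) * symb m Mmc x)
    (hpinv : ∀ x : 𝕋,
      symb m Mpc x * symb m Mpic x = 1 ∧ symb m Mpic x * symb m Mpc x = 1)
    (hminv : ∀ x : 𝕋,
      symb m Mmc x * symb m Mmic x = 1 ∧ symb m Mmic x * symb m Mmc x = 1)
    (Mop Bp B0 Bm : (Fin m → Hzero μ) →L[ℂ] (Fin m → Hzero μ))
    (hMop : ∀ φ i, ∃ g : Lp ℂ 2 μ,
      (⇑g =ᵐ[μ] fun x => ∑ j, symb m Mc x i j * (φ j : Lp ℂ 2 μ) x) ∧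
      Mop φ i = (Hzero μ).orthogonalProjectionOnto g)
    (hBp : ∀ φ i, ∃ g : Lp ℂ 2 μ,
      (⇑g =ᵐ[μ] fun x => ∑ j, symb m Mpic x i j * (φ j : Lp ℂ 2 μ) x) ∧
      Bp φ i = (Hzero μ).orthogonalProjectionOnto g)
    (hB0 : ∀ φ i, ∃ g : Lp ℂ 2 μ,
      (⇑g =ᵐ[μ] fun x => fourier (-(κ i)) x * (φ i : Lp ℂ 2 μ) x) ∧
      B0 φ i = (Hzero μ).orthogonalProjectionOnto g)
    (hBm : ∀ φ i, ∃ g : Lp ℂ 2 μ,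
      (⇑g =ᵐ[μ] fun x => ∑ j, symb m Mmic x i j * (φ j : Lp ℂ 2 μ) x) ∧
      Bm φ i = (Hzero μ).orthogonalProjectionOnto g) :
    (∀ φ : Fin m → Hzero μ, Mop (Bm (B0 (Bp φ))) = φ) ∧
    Function.Surjective ⇑Mop := by
  classical
  have key : ∀ φ : Fin m → Hzero μ, Mop (Bm (B0 (Bp φ))) = φ := by
    intro φ
    set P := (Hzero μ).orthogonalProjectionOnto with hPdef
    -- bounded continuous symbols
    set Fc : Fin m → Fin m → (𝕋 →ᵇ ℂ) := fun i j => WHaux.FA fun s => Mc s i j with hFcdef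
    set Fpc : Fin m → Fin m → (𝕋 →ᵇ ℂ) := fun i j => WHaux.FA fun s => Mpc s i j with hFpcdef
    set Fpi : Fin m → Fin m → (𝕋 →ᵇ ℂ) := fun i j => WHaux.FA fun s => Mpic s i j with hFpidef
    set Fmi : Fin m → Fin m → (𝕋 →ᵇ ℂ) := fun i j => WHaux.FA fun s => Mmic s i j with hFmidef
    have hFcx : ∀ i j x, Fc i j x = symb m Mc x i j := fun i j x =>
      WHaux.FA_apply (hMc i j) x
    have hFpcx : ∀ i j x, Fpc i j x = symb m Mpc x i j := fun i j x =>
      WHaux.FA_apply (hMpc i j) x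
    have hFpix : ∀ i j x, Fpi i j x = symb m Mpic x i j := fun i j x =>
      WHaux.FA_apply (hMpic i j) x
    have hFmix : ∀ i j x, Fmi i j x = symb m Mmic x i j := fun i j x =>
      WHaux.FA_apply (hMmic i j) x
    -- symbol identities
    have I1 : ∀ i k, ∑ j, Fc i j * Fmi j k = Fpc i k * WHaux.fB (κ k) := by
      intro i k
      ext x
      calc (∑ j, Fc i j * Fmi j k) x
          = ∑ j, Fc i j x * Fmi j k x := by
            rw [BoundedContinuousFunction.sum_apply]
            exact Finset.sum_congr rfl fun j _ => rfl
        _ = ∑ j, symb m Mc x i j * symb m Mmic x j k :=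
            Finset.sum_congr rfl fun j _ => by rw [hFcx, hFmix]
        _ = (symb m Mc x * symb m Mmic x) i k := (Matrix.mul_apply).symm
        _ = ((symb m Mpc x * Matrix.diagonal fun i' => fourier (κ i') x) *
              (symb m Mmc x * symb m Mmic x)) i k := by
            rw [hfact x, Matrix.mul_assoc]
        _ = (symb m Mpc x * Matrix.diagonal fun i' => fourier (κ i') x) i k := by
            rw [(hminv x).1, Matrix.mul_one]
        _ = symb m Mpc x i k * fourier (κ k) x := Matrix.mul_diagonal _ _ _ _
        _ = Fpc i k x * WHaux.fB (κ k) x := by rw [hFpcx, WHaux.fB_apply]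
        _ = (Fpc i k * WHaux.fB (κ k)) x := rfl
    have I2 : ∀ i l, ∑ k, Fpc i k * Fpi k l = if i = l then 1 else 0 := by
      intro i l
      ext x
      calc (∑ k, Fpc i k * Fpi k l) x
          = ∑ k, Fpc i k x * Fpi k l x := by
            rw [BoundedContinuousFunction.sum_apply]
            exact Finset.sum_congr rfl fun k _ => rfl
        _ = ∑ k, symb m Mpc x i k * symb m Mpic x k l :=
            Finset.sum_congr rfl fun k _ => by rw [hFpcx, hFpix]
        _ = (symb m Mpc x * symb m Mpic x) i l := (Matrix.mul_apply).symm
        _ = (1 : Matrix (Fin m) (Fin m) ℂ) i l := by rw [(hpinv x).1]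
        _ = if i = l then 1 else 0 := Matrix.one_apply
        _ = ((if i = l then 1 else 0 : 𝕋 →ᵇ ℂ)) x := by split <;> rfl
    -- the elements
    set a : Fin m → Lp ℂ 2 μ :=
      fun i => ∑ j, WHaux.mulLp (Fpi i j) ((φ j : Lp ℂ 2 μ)) with hadef
    set p : Fin m → Lp ℂ 2 μ := fun k => (P (a k) : Lp ℂ 2 μ) with hpdef
    set q : Fin m → Lp ℂ 2 μ := fun k => WHaux.mulLp (WHaux.fB (-(κ k))) (p k) with hqdef
    set r : Fin m → Lp ℂ 2 μ := fun i => ∑ j, WHaux.mulLp (Fmi i j) (q j) with hrdef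
    have hp_mem : ∀ k, p k ∈ Hzero μ := fun k => SetLike.coe_mem _
    have hq_mem : ∀ k, q k ∈ Hzero μ := fun k =>
      WHaux.mulLp_fB_mem _ (neg_nonpos.mpr (hκ k)) (hp_mem k)
    have hr_mem : ∀ i, r i ∈ Hzero μ := by
      intro i
      refine Submodule.sum_mem _ fun j _ => ?_
      refine WHaux.mem_Hzero_mulLp_FA (hMmic i j) (fun t ht => ?_) (hq_mem j)
      show Mmic t i j = 0
      rw [hmi_supp t ht]
      rfl
    -- step 1 : Bp
    have hBpφ : ∀ i, Bp φ i = P (a i) := by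
      intro i
      obtain ⟨g, hg1, hg2⟩ := hBp φ i
      rw [hg2]
      congr 1
      apply MeasureTheory.Lp.ext
      filter_upwards [hg1, WHaux.coeFn_sum_mulLp Finset.univ (fun j => Fpi i j)
        (fun j => (φ j : Lp ℂ 2 μ))] with x hx1 hx2
      rw [hx1, hx2]
      exact Finset.sum_congr rfl fun j _ => by rw [hFpix]
    -- step 2 : B0
    have hB0c : ∀ i, ((B0 (Bp φ) i : Lp ℂ 2 μ)) = q i := by
      intro i
      obtain ⟨g, hg1, hg2⟩ := hB0 (Bp φ) i
      have hgq : g = q i := by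
        apply MeasureTheory.Lp.ext
        filter_upwards [hg1, WHaux.coeFn_mulLp (WHaux.fB (-(κ i))) (p i)] with x hx1 hx2
        rw [hx1, hx2, WHaux.fB_apply, hBpφ i]
      rw [hg2, hgq]
      exact Submodule.starProjection_eq_self_iff.mpr (hq_mem i)
    -- step 3 : Bm
    have hBmc : ∀ i, ((Bm (B0 (Bp φ)) i : Lp ℂ 2 μ)) = r i := by
      intro i
      obtain ⟨g, hg1, hg2⟩ := hBm (B0 (Bp φ)) i
      have hgr : g = r i := by
        apply MeasureTheory.Lp.ext
        filter_upwards [hg1, WHaux.coeFn_sum_mulLp Finset.univ (fun j => Fmi i j)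
          (fun j => q j)] with x hx1 hx2
        rw [hx1, hx2]
        refine Finset.sum_congr rfl fun j _ => ?_
        rw [hFmix, hB0c j]
      rw [hg2, hgr]
      exact Submodule.starProjection_eq_self_iff.mpr (hr_mem i)
    -- the key algebraic computation
    have walg : ∀ i, ∑ j, WHaux.mulLp (Fc i j) (r j) =
        ((φ i : Lp ℂ 2 μ)) - ∑ k, WHaux.mulLp (Fpc i k) (a k - p k) := by
      intro i
      have step1 : ∑ j, WHaux.mulLp (Fc i j) (r j) = ∑ k, WHaux.mulLp (Fpc i k) (p k) := by
        calc ∑ j, WHaux.mulLp (Fc i j) (r j)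
            = ∑ j, ∑ k, WHaux.mulLp (Fc i j) (WHaux.mulLp (Fmi j k) (q k)) :=
              Finset.sum_congr rfl fun j _ => WHaux.mulLp_sum_right _ _ _
          _ = ∑ j, ∑ k, WHaux.mulLp (Fc i j * Fmi j k) (q k) :=
              Finset.sum_congr rfl fun j _ => Finset.sum_congr rfl fun k _ =>
                (WHaux.mulLp_mul _ _ _).symm
          _ = ∑ k, ∑ j, WHaux.mulLp (Fc i j * Fmi j k) (q k) := Finset.sum_comm
          _ = ∑ k, WHaux.mulLp (∑ j, Fc i j * Fmi j k) (q k) :=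
              Finset.sum_congr rfl fun k _ => (WHaux.mulLp_sum_left _ _ _).symm
          _ = ∑ k, WHaux.mulLp (Fpc i k * WHaux.fB (κ k)) (q k) :=
              Finset.sum_congr rfl fun k _ => by rw [I1]
          _ = ∑ k, WHaux.mulLp (Fpc i k) (p k) := by
              refine Finset.sum_congr rfl fun k _ => ?_
              have hqp : WHaux.mulLp (WHaux.fB (κ k)) (q k) = p k := by
                show WHaux.mulLp (WHaux.fB (κ k))
                    (WHaux.mulLp (WHaux.fB (-(κ k))) (p k)) = p k
                rw [← WHaux.mulLp_mul, WHaux.fB_mul, add_neg_cancel, WHaux.fB_zero,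
                  WHaux.mulLp_one]
              rw [WHaux.mulLp_mul, hqp]
      have step2 : ∑ k, WHaux.mulLp (Fpc i k) (a k) = ((φ i : Lp ℂ 2 μ)) := by
        calc ∑ k, WHaux.mulLp (Fpc i k) (a k)
            = ∑ k, ∑ l, WHaux.mulLp (Fpc i k) (WHaux.mulLp (Fpi k l) ((φ l : Lp ℂ 2 μ))) :=
              Finset.sum_congr rfl fun k _ => WHaux.mulLp_sum_right _ _ _
          _ = ∑ k, ∑ l, WHaux.mulLp (Fpc i k * Fpi k l) ((φ l : Lp ℂ 2 μ)) :=
              Finset.sum_congr rfl fun k _ => Finset.sum_congr rfl fun l _ =>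
                (WHaux.mulLp_mul _ _ _).symm
          _ = ∑ l, ∑ k, WHaux.mulLp (Fpc i k * Fpi k l) ((φ l : Lp ℂ 2 μ)) := Finset.sum_comm
          _ = ∑ l, WHaux.mulLp (∑ k, Fpc i k * Fpi k l) ((φ l : Lp ℂ 2 μ)) :=
              Finset.sum_congr rfl fun l _ => (WHaux.mulLp_sum_left _ _ _).symm
          _ = ∑ l, WHaux.mulLp (if i = l then 1 else 0) ((φ l : Lp ℂ 2 μ)) :=
              Finset.sum_congr rfl fun l _ => by rw [I2]
          _ = ∑ l, (if i = l then ((φ l : Lp ℂ 2 μ)) else 0) := by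
              refine Finset.sum_congr rfl fun l _ => ?_
              split
              · exact WHaux.mulLp_one _
              · exact WHaux.mulLp_zero_left _
          _ = ((φ i : Lp ℂ 2 μ)) := by rw [Finset.sum_ite_eq]; simp
      rw [step1]
      have : ∀ k, WHaux.mulLp (Fpc i k) (p k) =
          WHaux.mulLp (Fpc i k) (a k) - WHaux.mulLp (Fpc i k) (a k - p k) := by
        intro k
        rw [WHaux.mulLp_sub_right]
        abel
      rw [Finset.sum_congr rfl fun k _ => this k, Finset.sum_sub_distrib, step2]
    -- conclusion
    funext i
    obtain ⟨g, hg1, hg2⟩ := hMop (Bm (B0 (Bp φ))) i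
    have hgw : g = ∑ j, WHaux.mulLp (Fc i j) (r j) := by
      apply MeasureTheory.Lp.ext
      filter_upwards [hg1, WHaux.coeFn_sum_mulLp Finset.univ (fun j => Fc i j)
        (fun j => r j)] with x hx1 hx2
      rw [hx1, hx2]
      refine Finset.sum_congr rfl fun j _ => ?_
      rw [hFcx, hBmc j]
    have hw_orth : ∑ k, WHaux.mulLp (Fpc i k) (a k - p k) ∈ (Hzero μ)ᗮ := by
      refine Submodule.sum_mem _ fun k _ => ?_
      refine WHaux.mem_orth_mulLp_FA (hMpc i k) (fun t ht => ?_) ?_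
      · show Mpc t i k = 0
        rw [hp_supp t ht]
        rfl
      · exact Submodule.sub_starProjection_mem_orthogonal (K := Hzero μ) (a k)
    rw [hg2, hgw, walg i, map_sub]
    rw [Submodule.orthogonalProjectionOnto_apply_of_mem_orthogonal hw_orth]
    rw [Submodule.orthogonalProjectionOnto_mem_subspace_eq_self (K := Hzero μ) (φ i)]
    exact sub_zero _
  exact ⟨key, fun ψ => ⟨Bm (B0 (Bp ψ)), key ψ⟩⟩
end
end

section
/- Under the hypotheses of the previous statement (Wiener-Hopf factorization with all partial indices zero, so M₀ = I), the operator 𝐌φ = P(Mφ | (H₀)^m) is invertible, with inverse 𝐌₋⁻¹ 𝐌₊⁻¹. -/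
open MeasureTheory Filter Complex Topology
open scoped Real ENNReal

noncomputable section

local notation "𝕋" => AddCircle (2 * Real.pi)

section WHAux


variable {μ : Measure 𝕋} [IsFiniteMeasure μ]

lemma lp_ext {f g : Lp ℂ 2 μ} (h : ⇑f =ᵐ[μ] ⇑g) : f = g :=
  Subtype.eq (MeasureTheory.AEEqFun.ext h)

lemma coeFn_finsum {ι : Type*} (s : Finset ι) (F : ι → Lp ℂ 2 μ) :
    ⇑(∑ i ∈ s, F i) =ᵐ[μ] fun x => ∑ i ∈ s, F i x := by
  classical
  induction s using Finset.induction with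
  | empty => simp only [Finset.sum_empty]; exact Lp.coeFn_zero (E := ℂ) (p := 2) (μ := μ)
  | @insert a s hni ih =>
    rw [Finset.sum_insert hni]
    filter_upwards [Lp.coeFn_add (F a) (∑ i ∈ s, F i), ih] with x hx hx2
    rw [Finset.sum_insert hni, hx, Pi.add_apply, hx2]

lemma memLp_cmul (f : C(𝕋, ℂ)) (g : Lp ℂ 2 μ) :
    MemLp (fun x => f x * g x) 2 μ := by
  have hf : MemLp (⇑f) ∞ μ :=
    memLp_top_of_bound f.continuous.aestronglyMeasurable ‖f‖
      (Eventually.of_forall fun x => f.norm_coe_le_norm x)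
  exact MemLp.smul (r := 2) (Lp.memLp g) hf

lemma eLpNorm_cmul_le (f : C(𝕋, ℂ)) (g : Lp ℂ 2 μ) :
    eLpNorm (fun x => f x * g x) 2 μ ≤ ‖f‖₊ * eLpNorm (⇑g) 2 μ := by
  have h1 : eLpNorm (fun x => f x * g x) 2 μ ≤ eLpNorm (fun x => (‖f‖ : ℂ) * g x) 2 μ := by
    refine eLpNorm_mono_ae (Eventually.of_forall fun x => ?_)
    rw [norm_mul, norm_mul, Complex.norm_real, Real.norm_of_nonneg (norm_nonneg f)]
    exact mul_le_mul_of_nonneg_right (f.norm_coe_le_norm x) (norm_nonneg _)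
  refine h1.trans ?_
  have h2 : (fun x => (‖f‖ : ℂ) * g x) = (‖f‖ : ℂ) • ⇑g := by
    funext x; simp [smul_eq_mul]
  rw [h2]
  exact (eLpNorm_const_smul_le).trans (le_of_eq (by simp [enorm_eq_nnnorm]))

def mulC (f : C(𝕋, ℂ)) : Lp ℂ 2 μ →L[ℂ] Lp ℂ 2 μ :=
  LinearMap.mkContinuous
    { toFun := fun g => (memLp_cmul f g).toLp _
      map_add' := fun g h => by
        have hae : (fun x => f x * (g + h : Lp ℂ 2 μ) x)
            =ᵐ[μ] (fun x => f x * g x) + (fun x => f x * h x) := by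
          filter_upwards [Lp.coeFn_add g h] with x hx
          rw [hx]; simp [mul_add]
        show (memLp_cmul f (g + h)).toLp _
          = (memLp_cmul f g).toLp _ + (memLp_cmul f h).toLp _
        rw [MemLp.toLp_congr (memLp_cmul f (g + h))
          ((memLp_cmul f g).add (memLp_cmul f h)) hae, MemLp.toLp_add]
      map_smul' := fun c g => by
        have hae : (fun x => f x * (c • g : Lp ℂ 2 μ) x)
            =ᵐ[μ] c • (fun x => f x * g x) := by
          filter_upwards [Lp.coeFn_smul c g] with x hx
          rw [hx]; simp only [Pi.smul_apply, smul_eq_mul]; ring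
        show (memLp_cmul f (c • g)).toLp _ = c • (memLp_cmul f g).toLp _
        rw [MemLp.toLp_congr (memLp_cmul f (c • g))
          ((memLp_cmul f g).const_smul c) hae, MemLp.toLp_const_smul] }
    ‖f‖ (fun g => by
      rw [LinearMap.coe_mk, AddHom.coe_mk, Lp.norm_toLp, Lp.norm_def]
      have := eLpNorm_cmul_le f g
      calc (eLpNorm (fun x => f x * g x) 2 μ).toReal
          ≤ ((‖f‖₊ : ℝ≥0∞) * eLpNorm (⇑g) 2 μ).toReal := by
            exact ENNReal.toReal_mono (by
              exact ENNReal.mul_ne_top ENNReal.coe_ne_top (Lp.eLpNorm_ne_top g)) this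
        _ = ‖f‖ * (eLpNorm (⇑g) 2 μ).toReal := by
            rw [ENNReal.toReal_mul]; simp)

lemma mulC_coeFn (f : C(𝕋, ℂ)) (g : Lp ℂ 2 μ) :
    ⇑(mulC f g) =ᵐ[μ] fun x => f x * g x :=
  MemLp.coeFn_toLp (memLp_cmul f g)

lemma mulC_mulC (f g : C(𝕋, ℂ)) (h : Lp ℂ 2 μ) :
    mulC f (mulC g h) = mulC (f * g) h := by
  refine lp_ext ?_
  filter_upwards [mulC_coeFn f (mulC g h), mulC_coeFn g h, mulC_coeFn (f * g) h]
    with x h1 h2 h3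
  simp [h1, h2, h3]; ring

lemma mulC_one (g : Lp ℂ 2 μ) : mulC 1 g = g := by
  refine lp_ext ?_
  filter_upwards [mulC_coeFn 1 g] with x h1
  simp [h1]

lemma mulC_add_f (f₁ f₂ : C(𝕋, ℂ)) (g : Lp ℂ 2 μ) :
    mulC (f₁ + f₂) g = mulC f₁ g + mulC f₂ g := by
  refine lp_ext ?_
  filter_upwards [mulC_coeFn (f₁ + f₂) g, Lp.coeFn_add (mulC f₁ g) (mulC f₂ g),
    mulC_coeFn f₁ g, mulC_coeFn f₂ g] with x h1 h2 h3 h4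
  rw [h1, h2, Pi.add_apply, h3, h4, ContinuousMap.add_apply, add_mul]

lemma mulC_zero_f' (g : Lp ℂ 2 μ) : mulC (0 : C(𝕋, ℂ)) g = 0 := by
  refine lp_ext ?_
  filter_upwards [mulC_coeFn 0 g, Lp.coeFn_zero (E := ℂ) (p := 2) (μ := μ)] with x h1 h2
  rw [h1, h2]; simp

lemma mulC_sum_f {ι : Type*} (s : Finset ι) (f : ι → C(𝕋, ℂ)) (g : Lp ℂ 2 μ) :
    mulC (∑ i ∈ s, f i) g = ∑ i ∈ s, mulC (f i) g :=
  map_sum (AddMonoidHom.mk' (fun f => mulC f g) (fun a b => mulC_add_f a b g)) f s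


/-! ### Wiener-algebra continuous functions -/

lemma summable_fourier (c : ℤ → ℂ) (hc : Summable fun s => ‖c s‖) :
    Summable fun s => c s • (fourier s : C(𝕋, ℂ)) := by
  refine Summable.of_norm ?_
  simpa [norm_smul, fourier_norm] using hc

def FW (c : ℤ → ℂ) : C(𝕋, ℂ) := ∑' s, c s • (fourier s : C(𝕋, ℂ))

lemma FW_apply (c : ℤ → ℂ) (hc : Summable fun s => ‖c s‖) (x : 𝕋) :
    FW c x = ∑' s, c s * fourier s x := by
  have h := (summable_fourier c hc)
  have := (ContinuousMap.evalCLM ℂ (M := ℂ) x).map_tsum h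
  simpa [FW, ContinuousMap.evalCLM, smul_eq_mul] using this

lemma symb_eq_FW {m : ℕ} (N : ℤ → Matrix (Fin m) (Fin m) ℂ)
    (hN : ∀ i j, Summable fun s => ‖N s i j‖) (x : 𝕋) (i j : Fin m) :
    symb m N x i j = FW (fun s => N s i j) x := by
  rw [FW_apply _ (hN i j)]; rfl

lemma summable_shift (c : ℤ → ℂ) (hc : Summable fun s => ‖c s‖) (t : ℤ) :
    Summable fun s => ‖c (s - t)‖ :=
  ((Equiv.subRight t).summable_iff (f := fun s => ‖c s‖)).mpr hc

lemma FW_mul_fourier (c : ℤ → ℂ) (hc : Summable fun s => ‖c s‖) (t : ℤ) :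
    FW c * (fourier t : C(𝕋, ℂ)) = FW (fun s => c (s - t)) := by
  ext x
  rw [ContinuousMap.mul_apply, FW_apply c hc x, FW_apply _ (summable_shift c hc t) x]
  rw [← tsum_mul_right]
  rw [← (Equiv.addRight t).tsum_eq (f := fun u => c (u - t) * fourier u x)]
  refine tsum_congr fun s => ?_
  simp only [Equiv.coe_addRight, add_sub_cancel_right, ← fourier_add, mul_assoc]

lemma toLp_FW_mem (c : ℤ → ℂ) (hc : Summable fun s => ‖c s‖)
    (hsupp : ∀ s : ℤ, 0 < s → c s = 0) :
    ContinuousMap.toLp 2 μ ℂ (FW c) ∈ Hzero μ := by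
  have hsum : HasSum (fun s => c s • ContinuousMap.toLp 2 μ ℂ (fourier s))
      (ContinuousMap.toLp 2 μ ℂ (FW c)) := by
    have := ((summable_fourier c hc).hasSum).mapL (ContinuousMap.toLp 2 μ ℂ)
    simpa [Function.comp, FW] using this
  have hterm : ∀ s : ℤ, c s • ContinuousMap.toLp 2 μ ℂ (fourier s) ∈ Hzero μ := by
    intro s
    rcases le_or_gt s 0 with hs | hs
    · refine Submodule.smul_mem _ _ ?_
      refine Submodule.le_topologicalClosure _ (Submodule.subset_span ?_)
      refine ⟨(-s).toNat, ?_⟩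
      have h : (((-s).toNat : ℤ)) = -s := Int.toNat_of_nonneg (by omega)
      simp [h]
    · simp [hsupp s hs]
  refine (Submodule.isClosed_topologicalClosure _).mem_of_tendsto hsum ?_
  exact Eventually.of_forall fun F => Submodule.sum_mem _ fun s _ => hterm s

lemma mulC_toLp (f g : C(𝕋, ℂ)) :
    mulC f (ContinuousMap.toLp 2 μ ℂ g) = ContinuousMap.toLp 2 μ ℂ (f * g) := by
  refine lp_ext ?_
  filter_upwards [mulC_coeFn f (ContinuousMap.toLp 2 μ ℂ g),
    ContinuousMap.coeFn_toLp (𝕜 := ℂ) (p := 2) μ g, ContinuousMap.coeFn_toLp (𝕜 := ℂ) (p := 2) μ (f * g)]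
    with x h1 h2 h3
  rw [h1, h2, h3, ContinuousMap.mul_apply]

lemma mulC_mem_Hzero (c : ℤ → ℂ) (hc : Summable fun s => ‖c s‖)
    (hsupp : ∀ s : ℤ, 0 < s → c s = 0) {φ : Lp ℂ 2 μ} (hφ : φ ∈ Hzero μ) :
    mulC (FW c) φ ∈ Hzero μ := by
  have hpre : Hzero μ ≤ (Hzero μ).comap (mulC (μ := μ) (FW c)).toLinearMap := by
    refine Submodule.topologicalClosure_minimal _ ?_ ?_
    · rw [Submodule.span_le]
      rintro _ ⟨n, rfl⟩
      simp only [SetLike.mem_coe, Submodule.mem_comap, ContinuousLinearMap.coe_coe]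
      rw [mulC_toLp, FW_mul_fourier c hc]
      refine toLp_FW_mem _ (summable_shift c hc _) (fun s hs => hsupp (s - -(n : ℤ)) (by omega))
    · exact IsClosed.preimage (mulC (FW c)).continuous
        (Submodule.isClosed_topologicalClosure _)
  exact hpre hφ

lemma summable_conj_neg (c : ℤ → ℂ) (hc : Summable fun s => ‖c s‖) :
    Summable fun s => ‖(starRingEnd ℂ) (c (-s))‖ := by
  simpa [Function.comp_def] using hc.comp_injective (neg_injective : Function.Injective (Neg.neg : ℤ → ℤ))

lemma star_FW (c : ℤ → ℂ) (hc : Summable fun s => ‖c s‖) :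
    star (FW c) = FW (fun s => (starRingEnd ℂ) (c (-s))) := by
  ext x
  rw [ContinuousMap.star_apply, FW_apply c hc x, FW_apply _ (summable_conj_neg c hc) x]
  rw [tsum_star]
  rw [← (Equiv.neg ℤ).tsum_eq (f := fun s => (starRingEnd ℂ) (c (-s)) * fourier s x)]
  refine tsum_congr fun s => ?_
  simp only [Equiv.neg_apply, neg_neg, star_mul', Complex.star_def, ← fourier_neg, mul_comm]

lemma inner_mulC (f : C(𝕋, ℂ)) (g h : Lp ℂ 2 μ) :
    (inner ℂ g (mulC f h) : ℂ) = inner ℂ (mulC (star f) g) h := by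
  rw [MeasureTheory.L2.inner_def, MeasureTheory.L2.inner_def]
  refine integral_congr_ae ?_
  filter_upwards [mulC_coeFn f h, mulC_coeFn (star f) g] with x h1 h2
  rw [h1, h2]
  simp only [RCLike.inner_apply, ContinuousMap.star_apply, Complex.star_def, map_mul,
    Complex.conj_conj]
  ring

lemma mulC_mem_orthogonal (c : ℤ → ℂ) (hc : Summable fun s => ‖c s‖)
    (hsupp : ∀ s : ℤ, s < 0 → c s = 0) {r : Lp ℂ 2 μ} (hr : r ∈ (Hzero μ)ᗮ) :
    mulC (FW c) r ∈ (Hzero μ)ᗮ := by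
  rw [Submodule.mem_orthogonal]
  intro u hu
  rw [inner_mulC, star_FW c hc]
  refine hr _ (mulC_mem_Hzero _ (summable_conj_neg c hc) (fun s hs => ?_) hu)
  simp [hsupp (-s) (by omega)]


/-! ### Toeplitz machinery -/

lemma sum_mulC_coeFn {m : ℕ} (N : ℤ → Matrix (Fin m) (Fin m) ℂ)
    (hN : ∀ i j, Summable fun s => ‖N s i j‖) (ψ : Fin m → Lp ℂ 2 μ) (i : Fin m) :
    ⇑(∑ j, mulC (FW fun s => N s i j) (ψ j))
      =ᵐ[μ] fun x => ∑ j, symb m N x i j * (ψ j) x := by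
  have h1 : ∀ᵐ x ∂μ, ∀ j, (mulC (FW fun s => N s i j) (ψ j)) x
      = FW (fun s => N s i j) x * (ψ j) x :=
    ae_all_iff.2 fun j => mulC_coeFn _ _
  filter_upwards [h1,
    coeFn_finsum Finset.univ (fun j => mulC (FW fun s => N s i j) (ψ j))] with x hx hsum
  rw [hsum]
  exact Finset.sum_congr rfl fun j _ => (hx j).trans (by rw [symb_eq_FW N hN])

lemma sum_mulC_mem {m : ℕ} (N : ℤ → Matrix (Fin m) (Fin m) ℂ)
    (hN : ∀ i j, Summable fun s => ‖N s i j‖) (hsupp : ∀ s : ℤ, 0 < s → N s = 0)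
    (ψ : Fin m → Lp ℂ 2 μ) (hψ : ∀ j, ψ j ∈ Hzero μ) (i : Fin m) :
    (∑ j, mulC (FW fun s => N s i j) (ψ j)) ∈ Hzero μ :=
  Submodule.sum_mem _ fun j _ =>
    mulC_mem_Hzero _ (hN i j) (fun s hs => by rw [hsupp s hs]; rfl) (hψ j)

lemma sum_mulC_collapse {m : ℕ} (A B : ℤ → Matrix (Fin m) (Fin m) ℂ)
    (hA : ∀ i j, Summable fun s => ‖A s i j‖) (hB : ∀ i j, Summable fun s => ‖B s i j‖)
    (G : Fin m → Fin m → C(𝕋, ℂ))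
    (hG : ∀ (x : 𝕋) (i k : Fin m), ∑ j, symb m A x i j * symb m B x j k = G i k x)
    (ψ : Fin m → Lp ℂ 2 μ) (i : Fin m) :
    ∑ j, mulC (FW fun s => A s i j) (∑ k, mulC (FW fun s => B s j k) (ψ k))
      = ∑ k, mulC (G i k) (ψ k) := by
  have h1 : ∀ j, mulC (FW fun s => A s i j) (∑ k, mulC (FW fun s => B s j k) (ψ k))
      = ∑ k, mulC (FW (fun s => A s i j) * FW (fun s => B s j k)) (ψ k) := fun j => by
    rw [map_sum]
    exact Finset.sum_congr rfl fun k _ => mulC_mulC _ _ _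
  rw [Finset.sum_congr rfl fun j _ => h1 j, Finset.sum_comm]
  refine Finset.sum_congr rfl fun k _ => ?_
  rw [← mulC_sum_f]
  have hGk : (∑ j, FW (fun s => A s i j) * FW (fun s => B s j k)) = G i k := by
    ext x
    rw [ContinuousMap.sum_apply, ← hG x i k]
    exact Finset.sum_congr rfl fun j _ => by
      rw [ContinuousMap.mul_apply, symb_eq_FW A hA, symb_eq_FW B hB]
  rw [hGk]

lemma sum_mulC_inv {m : ℕ} (A B : ℤ → Matrix (Fin m) (Fin m) ℂ)
    (hA : ∀ i j, Summable fun s => ‖A s i j‖) (hB : ∀ i j, Summable fun s => ‖B s i j‖)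
    (hAB : ∀ x : 𝕋, symb m A x * symb m B x = 1)
    (ψ : Fin m → Lp ℂ 2 μ) (i : Fin m) :
    ∑ j, mulC (FW fun s => A s i j) (∑ k, mulC (FW fun s => B s j k) (ψ k)) = ψ i := by
  rw [sum_mulC_collapse A B hA hB (fun i k => if i = k then 1 else 0)
    (fun x i k => by
      rw [← Matrix.mul_apply, hAB x, Matrix.one_apply, apply_ite (fun f : C(𝕋, ℂ) => f x)]
      simp)]
  rw [Finset.sum_eq_single i
    (fun k _ hk => by rw [if_neg (fun h => hk h.symm)]; exact mulC_zero_f' _)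
    (fun h => absurd (Finset.mem_univ i) h)]
  rw [if_pos rfl, mulC_one]

lemma proj_sum_mulC_proj {m : ℕ} (A : ℤ → Matrix (Fin m) (Fin m) ℂ)
    (hA : ∀ i j, Summable fun s => ‖A s i j‖) (hsupp : ∀ s : ℤ, s < 0 → A s = 0)
    (u : Fin m → Lp ℂ 2 μ) (i : Fin m) :
    Submodule.orthogonalProjectionOnto (Hzero μ)
      (∑ k, mulC (FW fun s => A s i k)
        ((Submodule.orthogonalProjectionOnto (Hzero μ) (u k) : Lp ℂ 2 μ)))
    = Submodule.orthogonalProjectionOnto (Hzero μ) (∑ k, mulC (FW fun s => A s i k) (u k)) := by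
  have hd : (∑ k, mulC (FW fun s => A s i k) (u k))
      - (∑ k, mulC (FW fun s => A s i k)
          ((Submodule.orthogonalProjectionOnto (Hzero μ) (u k) : Lp ℂ 2 μ))) ∈ (Hzero μ)ᗮ := by
    rw [← Finset.sum_sub_distrib]
    refine Submodule.sum_mem _ fun k _ => ?_
    rw [← map_sub]
    exact mulC_mem_orthogonal _ (hA i k) (fun s hs => by rw [hsupp s hs]; rfl)
      (Submodule.sub_starProjection_mem_orthogonal (K := Hzero μ) (u k))
  rw [eq_comm, ← sub_eq_zero, ← map_sub]
  exact Submodule.orthogonalProjectionOnto_apply_of_mem_orthogonal hd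


end WHAux

set_option maxHeartbeats 1000000 in
/-- Wiener-Hopf factorization with all partial indices zero: `𝐌` is invertible with
inverse `𝐌₋⁻¹ 𝐌₊⁻¹`. -/
theorem wiener_hopf_inverse_zero_indices (μ : Measure 𝕋) [IsFiniteMeasure μ] (m : ℕ)
    (Mc Mpc Mpic Mmc Mmic : ℤ → Matrix (Fin m) (Fin m) ℂ)
    (hMc : ∀ i j, Summable fun s => ‖Mc s i j‖)
    (hMpc : ∀ i j, Summable fun s => ‖Mpc s i j‖)
    (hMpic : ∀ i j, Summable fun s => ‖Mpic s i j‖)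
    (hMmc : ∀ i j, Summable fun s => ‖Mmc s i j‖)
    (hMmic : ∀ i j, Summable fun s => ‖Mmic s i j‖)
    (hp_supp : ∀ s : ℤ, s < 0 → Mpc s = 0)
    (hpi_supp : ∀ s : ℤ, s < 0 → Mpic s = 0)
    (hm_supp : ∀ s : ℤ, 0 < s → Mmc s = 0)
    (hmi_supp : ∀ s : ℤ, 0 < s → Mmic s = 0)
    (hdet : ∀ x : 𝕋, (symb m Mc x).det ≠ 0)
    (hfact : ∀ x : 𝕋, symb m Mc x = symb m Mpc x * symb m Mmc x)
    (hpinv : ∀ x : 𝕋,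
      symb m Mpc x * symb m Mpic x = 1 ∧ symb m Mpic x * symb m Mpc x = 1)
    (hminv : ∀ x : 𝕋,
      symb m Mmc x * symb m Mmic x = 1 ∧ symb m Mmic x * symb m Mmc x = 1)
    (Mop Bp Bm : (Fin m → Hzero μ) →L[ℂ] (Fin m → Hzero μ))
    (hMop : ∀ φ i, ∃ g : Lp ℂ 2 μ,
      (⇑g =ᵐ[μ] fun x => ∑ j, symb m Mc x i j * (φ j : Lp ℂ 2 μ) x) ∧
      Mop φ i = Submodule.orthogonalProjectionOnto (Hzero μ) g)
    (hBp : ∀ φ i, ∃ g : Lp ℂ 2 μ,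
      (⇑g =ᵐ[μ] fun x => ∑ j, symb m Mpic x i j * (φ j : Lp ℂ 2 μ) x) ∧
      Bp φ i = Submodule.orthogonalProjectionOnto (Hzero μ) g)
    (hBm : ∀ φ i, ∃ g : Lp ℂ 2 μ,
      (⇑g =ᵐ[μ] fun x => ∑ j, symb m Mmic x i j * (φ j : Lp ℂ 2 μ) x) ∧
      Bm φ i = Submodule.orthogonalProjectionOnto (Hzero μ) g) :
    (∀ φ : Fin m → Hzero μ, Mop (Bm (Bp φ)) = φ) ∧
    (∀ φ : Fin m → Hzero μ, Bm (Bp (Mop φ)) = φ) ∧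
    Function.Bijective ⇑Mop := by
  -- canonical forms of the three operators
  have hMop' : ∀ φ i, Mop φ i = Submodule.orthogonalProjectionOnto (Hzero μ)
      (∑ j, mulC (FW fun s => Mc s i j) ↑(φ j)) := by
    intro φ i
    obtain ⟨g, hg, he⟩ := hMop φ i
    have hh := sum_mulC_coeFn (μ := μ) Mc hMc (fun j => ↑(φ j)) i
    have hgg : g = ∑ j, mulC (FW fun s => Mc s i j) ↑(φ j) := lp_ext (hg.trans hh.symm)
    rw [he, hgg]
  have hBp' : ∀ φ i, Bp φ i = Submodule.orthogonalProjectionOnto (Hzero μ)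
      (∑ j, mulC (FW fun s => Mpic s i j) ↑(φ j)) := by
    intro φ i
    obtain ⟨g, hg, he⟩ := hBp φ i
    have hh := sum_mulC_coeFn (μ := μ) Mpic hMpic (fun j => ↑(φ j)) i
    have hgg : g = ∑ j, mulC (FW fun s => Mpic s i j) ↑(φ j) := lp_ext (hg.trans hh.symm)
    rw [he, hgg]
  have hBm' : ∀ φ i, Bm φ i = Submodule.orthogonalProjectionOnto (Hzero μ)
      (∑ j, mulC (FW fun s => Mmic s i j) ↑(φ j)) := by
    intro φ i
    obtain ⟨g, hg, he⟩ := hBm φ i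
    have hh := sum_mulC_coeFn (μ := μ) Mmic hMmic (fun j => ↑(φ j)) i
    have hgg : g = ∑ j, mulC (FW fun s => Mmic s i j) ↑(φ j) := lp_ext (hg.trans hh.symm)
    rw [he, hgg]
  -- first identity : Mop ∘ Bm ∘ Bp = id
  have h1 : ∀ φ : Fin m → Hzero μ, Mop (Bm (Bp φ)) = φ := by
    intro φ
    funext i
    have hw : ∀ j, ((Bm (Bp φ) j : Lp ℂ 2 μ))
        = ∑ k, mulC (FW fun s => Mmic s j k) ((Bp φ k : Lp ℂ 2 μ)) := by
      intro j
      have hmem := sum_mulC_mem (μ := μ) Mmic hMmic hmi_supp (fun k => ↑(Bp φ k))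
        (fun k => (Bp φ k).2) j
      rw [hBm' (Bp φ) j]
      exact congrArg Subtype.val
        (Submodule.orthogonalProjectionOnto_mem_subspace_eq_self (⟨_, hmem⟩ : Hzero μ))
    rw [hMop' (Bm (Bp φ)) i]
    simp_rw [hw]
    have hc1 : ∑ j, mulC (FW fun s => Mc s i j)
          (∑ k, mulC (FW fun s => Mmic s j k) ((Bp φ k : Lp ℂ 2 μ)))
        = ∑ k, mulC (FW fun s => Mpc s i k) ((Bp φ k : Lp ℂ 2 μ)) := by
      refine sum_mulC_collapse Mc Mmic hMc hMmic (fun i k => FW fun s => Mpc s i k) ?_ _ i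
      intro x i' k'
      have hx : symb m Mc x * symb m Mmic x = symb m Mpc x := by
        rw [hfact x, mul_assoc, (hminv x).1, mul_one]
      calc ∑ j, symb m Mc x i' j * symb m Mmic x j k'
          = (symb m Mc x * symb m Mmic x) i' k' := (Matrix.mul_apply).symm
        _ = FW (fun s => Mpc s i' k') x := by
            rw [hx]; exact symb_eq_FW Mpc hMpc x i' k'
    rw [hc1]
    have hu : ∀ k, (Bp φ k : Lp ℂ 2 μ) = ↑(Submodule.orthogonalProjectionOnto (Hzero μ)
        (∑ l, mulC (FW fun s => Mpic s k l) ↑(φ l))) := fun k => by rw [hBp' φ k]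
    simp_rw [hu]
    have hproj := proj_sum_mulC_proj (μ := μ) Mpc hMpc hp_supp
      (fun k => ∑ l, mulC (FW fun s => Mpic s k l) ↑(φ l)) i
    beta_reduce at hproj
    rw [hproj]
    have hinv := sum_mulC_inv (μ := μ) Mpc Mpic hMpc hMpic (fun x => (hpinv x).1)
      (fun l => ↑(φ l)) i
    beta_reduce at hinv
    rw [hinv]
    exact Submodule.orthogonalProjectionOnto_mem_subspace_eq_self (φ i)
  -- second identity : Bm ∘ Bp ∘ Mop = id
  have h2 : ∀ φ : Fin m → Hzero μ, Bm (Bp (Mop φ)) = φ := by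
    intro φ
    funext j
    have hBpMop : ∀ k, Bp (Mop φ) k = Submodule.orthogonalProjectionOnto (Hzero μ)
        (∑ n, mulC (FW fun s => Mmc s k n) ↑(φ n)) := by
      intro k
      rw [hBp' (Mop φ) k]
      have hv : ∀ l, (Mop φ l : Lp ℂ 2 μ) = ↑(Submodule.orthogonalProjectionOnto (Hzero μ)
          (∑ n, mulC (FW fun s => Mc s l n) ↑(φ n))) := fun l => by rw [hMop' φ l]
      simp_rw [hv]
      have hproj := proj_sum_mulC_proj (μ := μ) Mpic hMpic hpi_supp
        (fun l => ∑ n, mulC (FW fun s => Mc s l n) ↑(φ n)) k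
      beta_reduce at hproj
      rw [hproj]
      congr 1
      refine sum_mulC_collapse Mpic Mc hMpic hMc (fun k n => FW fun s => Mmc s k n) ?_ _ k
      intro x k' n'
      have hx : symb m Mpic x * symb m Mc x = symb m Mmc x := by
        rw [hfact x, ← mul_assoc, (hpinv x).2, one_mul]
      calc ∑ l, symb m Mpic x k' l * symb m Mc x l n'
          = (symb m Mpic x * symb m Mc x) k' n' := (Matrix.mul_apply).symm
        _ = FW (fun s => Mmc s k' n') x := by
            rw [hx]; exact symb_eq_FW Mmc hMmc x k' n'
    have hwmem : ∀ k, (∑ n, mulC (FW fun s => Mmc s k n) ↑(φ n)) ∈ Hzero μ :=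
      fun k => sum_mulC_mem Mmc hMmc hm_supp _ (fun n => (φ n).2) k
    have hcoe : ∀ k, (Bp (Mop φ) k : Lp ℂ 2 μ)
        = ∑ n, mulC (FW fun s => Mmc s k n) ↑(φ n) := by
      intro k
      rw [hBpMop k]
      exact congrArg Subtype.val
        (Submodule.orthogonalProjectionOnto_mem_subspace_eq_self (⟨_, hwmem k⟩ : Hzero μ))
    rw [hBm' (Bp (Mop φ)) j]
    simp_rw [hcoe]
    have hinv := sum_mulC_inv (μ := μ) Mmic Mmc hMmic hMmc (fun x => (hminv x).2)
      (fun n => ↑(φ n)) j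
    beta_reduce at hinv
    rw [hinv]
    exact Submodule.orthogonalProjectionOnto_mem_subspace_eq_self (φ j)
  exact ⟨h1, h2, Function.bijective_iff_has_inverse.mpr ⟨fun ψ => Bm (Bp ψ), h2, h1⟩⟩
end
end

section
/- Let M be an m×m matrix function continuous on 𝕋, w ∈ 𝕋 with det M(w) = 0, and φ ∈ ℂ^m with rank [ M(w) φ ] = m (full row rank of the augmented matrix; here φ is the value at w of the right-hand side). Take F = δ_w I_n, the Dirac measure at w. Then there is no ψ ∈ (H₀)^m with P(Mψ | (H₀)^m) = φ in L²(𝕋,F)^m. That is, the LREM has no solution for this spectral measure. -/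
open MeasureTheory Filter Complex Topology
open scoped Real ENNReal

noncomputable section

local notation "𝕋" => AddCircle (2 * Real.pi)

lemma dirac_ae_iff (w : 𝕋) {f g : 𝕋 → ℂ} :
    f =ᵐ[Measure.dirac w] g ↔ f w = g w := by
  rw [EventuallyEq, MeasureTheory.ae_dirac_eq, eventually_pure]

lemma Hzero_dirac_top (w : 𝕋) : Hzero (Measure.dirac w) = ⊤ := by
  set μ := Measure.dirac w with hμ
  rw [Submodule.eq_top_iff']
  intro f
  apply Submodule.le_topologicalClosure
  set e₀ : Lp ℂ 2 μ := ContinuousMap.toLp 2 μ ℂ (fourier (-((0:ℕ) : ℤ))) with he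
  have h0 : ⇑e₀ w = 1 := by
    have h := (dirac_ae_iff w).mp
      (ContinuousMap.coeFn_toLp (𝕜 := ℂ) (p := 2) μ (fourier (-((0:ℕ) : ℤ))))
    rw [h]
    norm_num [fourier_zero]
  have hf : f = (f w) • e₀ := by
    apply Lp.ext
    rw [dirac_ae_iff w]
    have hs := (dirac_ae_iff w).mp (Lp.coeFn_smul (f w) e₀)
    rw [hs, Pi.smul_apply, h0, smul_eq_mul, mul_one]
  rw [hf]
  exact Submodule.smul_mem _ _ (Submodule.subset_span ⟨0, rfl⟩)

lemma rank_aux (m : ℕ) (A : Matrix (Fin m) (Fin m) ℂ) (φv : Fin m → ℂ)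
    (hrank : (Matrix.fromCols A (Matrix.of fun i (_ : Fin 1) => φv i)).rank = m)
    (v : Fin m → ℂ) (hv : v ≠ 0) (hvA : Matrix.vecMul v A = 0) :
    ∑ i, v i * φv i ≠ 0 := by
  intro hsum
  set B := Matrix.fromCols A (Matrix.of fun i (_ : Fin 1) => φv i) with hB
  have hvB : Matrix.vecMul v B = 0 := by
    rw [hB, Matrix.vecMul_fromCols, hvA]
    ext (j | j)
    · simp
    · simp [Matrix.vecMul, dotProduct, hsum]
  have hker : v ∈ LinearMap.ker (Matrix.transpose B).mulVecLin := by
    simp [Matrix.mulVecLin_apply, Matrix.mulVec_transpose, hvB]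
  have hrankT : (Matrix.transpose B).rank = m := by rw [Matrix.rank_transpose]; exact hrank
  have hrn := LinearMap.finrank_range_add_finrank_ker (Matrix.transpose B).mulVecLin
  rw [show Matrix.rank (Matrix.transpose B) =
    Module.finrank ℂ (LinearMap.range (Matrix.transpose B).mulVecLin) from rfl] at hrankT
  have hkpos : 0 < Module.finrank ℂ (LinearMap.ker (Matrix.transpose B).mulVecLin) := by
    have : Nontrivial (LinearMap.ker (Matrix.transpose B).mulVecLin) :=
      nontrivial_of_ne ⟨v, hker⟩ 0 (by simpa using hv)
    exact Module.finrank_pos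
  have hdim : Module.finrank ℂ (Fin m → ℂ) = m := by simp
  omega

/-- If `det M(w) = 0` at some `w ∈ 𝕋` while `[M(w) φ]` has full row rank `m`, then with
spectral measure `δ_w` the equation `P(Mψ | H₀^m) = φ` has no solution `ψ ∈ H₀^m`. -/
theorem no_solution_unit_circle_zero (m : ℕ) (w : 𝕋)
    (M : 𝕋 → Matrix (Fin m) (Fin m) ℂ)
    (hMcont : ∀ i j, Continuous fun x => M x i j)
    (φv : Fin m → ℂ)
    (hdet : (M w).det = 0)
    (hrank : (Matrix.fromCols (M w) (Matrix.of fun i (_ : Fin 1) => φv i)).rank = m) :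
    ¬ ∃ ψ : Fin m → Hzero (Measure.dirac w), ∀ i, ∃ g : Lp ℂ 2 (Measure.dirac w),
      (⇑g =ᵐ[Measure.dirac w]
        fun x => ∑ j, M x i j * (ψ j : Lp ℂ 2 (Measure.dirac w)) x) ∧
      ⇑((Submodule.orthogonalProjectionOnto (Hzero (Measure.dirac w)) g :
          Hzero (Measure.dirac w)) : Lp ℂ 2 (Measure.dirac w)) =ᵐ[Measure.dirac w]
        fun _ => φv i := by
  rintro ⟨ψ, hψ⟩
  set μ := Measure.dirac w with hμ
  obtain ⟨v, hv0, hvA⟩ := Matrix.exists_vecMul_eq_zero_iff.mpr hdet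
  have key : ∀ i, ∑ j, M w i j * (ψ j : Lp ℂ 2 μ) w = φv i := by
    intro i
    obtain ⟨g, hg1, hg2⟩ := hψ i
    have hmem : g ∈ Hzero μ := (Hzero_dirac_top w) ▸ Submodule.mem_top
    have hproj : ((Submodule.orthogonalProjectionOnto (Hzero μ) g : Hzero μ) : Lp ℂ 2 μ) = g :=
      Submodule.starProjection_eq_self_iff.mpr hmem
    rw [hproj] at hg2
    have h1 := (dirac_ae_iff w).mp (hg1.symm.trans hg2)
    exact h1
  have hzero : ∑ i, v i * φv i = 0 := by
    have : ∑ i, v i * φv i = ∑ j, (Matrix.vecMul v (M w)) j * (ψ j : Lp ℂ 2 μ) w := by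
      simp only [← key, Finset.mul_sum, Matrix.vecMul, dotProduct, Finset.sum_mul]
      rw [Finset.sum_comm]
      congr 1; ext j; congr 1; ext i; ring
    rw [this, hvA]
    simp
  exact rank_aux m (M w) φv hrank v hv0 hvA hzero
end
end

section
/- Let H, K, G be Hilbert spaces, 𝐌 : H → K a bounded surjective linear operator, and 𝐋 : H → G a bounded linear operator such that ker(𝐌) ∩ ker(𝐋) = {0} and the restriction 𝐋|_{ker(𝐌)} is bounded below (e.g., ker(𝐌) is finite dimensional). Then for every y ∈ K there exists a unique x ∈ H with 𝐌x = y minimizing ‖𝐋x‖ over the solution set {x : 𝐌x = y}. -/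
/-- Regularized solutions: if `𝐌` is surjective, `ker 𝐌 ∩ ker 𝐋 = {0}`, and `𝐋` is bounded
below on `ker 𝐌`, then for every `y` there is a unique solution of `𝐌x = y` minimizing
`‖𝐋x‖` over the solution set. -/
theorem regularized_solution_exists_unique {H K G : Type*}
    [NormedAddCommGroup H] [InnerProductSpace ℂ H] [CompleteSpace H]
    [NormedAddCommGroup K] [InnerProductSpace ℂ K] [CompleteSpace K]
    [NormedAddCommGroup G] [InnerProductSpace ℂ G] [CompleteSpace G]
    (M : H →L[ℂ] K) (L : H →L[ℂ] G)
    (hM : Function.Surjective M)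
    (hker : LinearMap.ker (M : H →ₗ[ℂ] K) ⊓ LinearMap.ker (L : H →ₗ[ℂ] G) = ⊥)
    (hbb : ∃ c : ℝ, 0 < c ∧ ∀ x ∈ LinearMap.ker (M : H →ₗ[ℂ] K), c * ‖x‖ ≤ ‖L x‖) :
    ∀ y : K, ∃! x : H, M x = y ∧ ∀ x' : H, M x' = y → ‖L x‖ ≤ ‖L x'‖ := by
  obtain ⟨c, hc, hcb⟩ := hbb
  intro y
  obtain ⟨x₀, hx₀⟩ := hM y
  set N := LinearMap.ker (M : H →ₗ[ℂ] K) with hNdef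
  haveI : CompleteSpace N := M.isClosed_ker.completeSpace_coe
  set f : N →L[ℂ] G := L.comp N.subtypeL with hfdef
  have hfapp : ∀ k : N, f k = L (k : H) := fun k => rfl
  have hanti : AntilipschitzWith ⟨c, hc.le⟩⁻¹ f := by
    refine f.antilipschitz_of_bound fun k => ?_
    have h2 : c * ‖(k : H)‖ ≤ ‖L (k : H)‖ := hcb k k.2
    have hn : ‖k‖ = ‖(k : H)‖ := rfl
    have hcoe : (((⟨c, hc.le⟩ : NNReal)⁻¹ : NNReal) : ℝ) = c⁻¹ := NNReal.coe_inv _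
    rw [hn, hfapp, hcoe, ← div_eq_inv_mul, le_div_iff₀ hc, mul_comm]
    exact h2
  have hfinj : Function.Injective f := hanti.injective
  have hclosed : IsClosed (Set.range f) := hanti.isClosed_range f.uniformContinuous
  set W := LinearMap.range (f : N →ₗ[ℂ] G) with hWdef
  have hWrange : (W : Set G) = Set.range f := by
    ext g; simp [hWdef, LinearMap.mem_range, Set.mem_range]
  haveI : CompleteSpace W :=
    IsClosed.completeSpace_coe (hs := show IsClosed (W : Set G) from hWrange ▸ hclosed)
  set u : G := -(L x₀) with hudef
  have hPW : (W.orthogonalProjectionOnto u : G) ∈ W := (W.orthogonalProjectionOnto u).2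
  obtain ⟨k, hk : f k = _⟩ := hPW
  -- decomposition of solutions
  have hdec : ∀ x' : H, M x' = y → x' - x₀ ∈ N := by
    intro x' hx'
    rw [hNdef, LinearMap.mem_ker, ContinuousLinearMap.coe_coe, map_sub, hx', hx₀, sub_self]
  have hnorm : ∀ (k' : N), ‖L (x₀ + (k' : H))‖ = ‖u - f k'‖ := by
    intro k'
    rw [map_add, ← hfapp, hudef, ← norm_neg]
    congr 1
    abel
  have hbdd : BddBelow (Set.range fun w : W => ‖u - (w : G)‖) :=
    ⟨0, by rintro r ⟨w, rfl⟩; exact norm_nonneg _⟩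
  have hmin : ∀ (k' : N), ‖u - (W.orthogonalProjectionOnto u : G)‖ ≤ ‖u - f k'‖ := by
    intro k'
    rw [← Submodule.starProjection_apply, Submodule.starProjection_minimal]
    exact ciInf_le hbdd (⟨f k', LinearMap.mem_range_self _ k'⟩ : W)
  refine ⟨x₀ + (k : H), ⟨?_, ?_⟩, ?_⟩
  · rw [map_add, hx₀, (show M k = 0 from LinearMap.mem_ker.mp k.2), add_zero]
  · intro x' hx'
    have hk' := hdec x' hx'
    have : x' = x₀ + ((⟨x' - x₀, hk'⟩ : N) : H) := by simp
    rw [this, hnorm, hnorm, hk]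
    exact hmin _
  · rintro x' ⟨hx', hminx'⟩
    set k' : N := ⟨x' - x₀, hdec x' hx'⟩ with hk'def
    have hx'eq : x' = x₀ + (k' : H) := by simp [hk'def]
    -- x' attains the infimum
    have h1 : ‖L x'‖ ≤ ‖L (x₀ + (k : H))‖ := by
      apply hminx'
      rw [map_add, hx₀, (show M k = 0 from LinearMap.mem_ker.mp k.2), add_zero]
    have h2 : ‖u - f k'‖ ≤ ‖u - (W.orthogonalProjectionOnto u : G)‖ := by
      rw [← hk, ← hnorm, ← hnorm, ← hx'eq]
      exact h1
    have h3 : ‖u - f k'‖ = ⨅ w : W, ‖u - (w : G)‖ :=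
      (le_antisymm h2 (hmin k')).trans (Submodule.starProjection_minimal u)
    have hWmem : f k' ∈ W := LinearMap.mem_range_self _ k'
    have h4 : (W.orthogonalProjectionOnto u : G) = f k' :=
      Submodule.eq_starProjection_of_mem_of_inner_eq_zero hWmem
        ((Submodule.norm_eq_iInf_iff_inner_eq_zero W hWmem).mp h3)
    have h5 : k' = k := hfinj (by rw [hk, h4])
    rw [hx'eq, h5]
end

section
/- Let H be a Hilbert space, 𝐌 : H → H bounded and surjective, 𝐋 : H → G bounded with ker(𝐌) ∩ ker(𝐋) = {0} and ker(𝐌) finite dimensional. Then the operator 𝐌*𝐌 + 𝐋*𝐋 is invertible on H, and the bilinear form [[x, y]] = ⟨𝐌x, 𝐌y⟩ + ⟨𝐋x, 𝐋y⟩ defines an inner product on H whose induced norm is equivalent to the original norm on H. -/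
lemma real_aux (a b ε c l m t k p : ℝ) (ha : 0 < a) (hb : 0 < b) (hε0 : 0 < ε) (hε1 : ε ≤ 1)
    (hεl : ε * l ^ 2 ≤ a ^ 2 / 2) (hc1 : c ≤ a ^ 2 / 2) (hc2 : c ≤ ε * b ^ 2 / 2)
    (hl : 0 ≤ l) (hm : 0 ≤ m) (ht : 0 ≤ t) (hk : 0 ≤ k) (hp : 0 ≤ p)
    (h1 : a * p ≤ m) (h2 : b * k ≤ t + l * p) :
    c * (k ^ 2 + p ^ 2) ≤ m ^ 2 + t ^ 2 := by
  have hm2 : a ^ 2 * p ^ 2 ≤ m ^ 2 := by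
    nlinarith [mul_le_mul h1 h1 (mul_nonneg ha.le hp) hm]
  have hk2 : b ^ 2 * k ^ 2 ≤ 2 * t ^ 2 + 2 * l ^ 2 * p ^ 2 := by
    have h3 : 0 ≤ t + l * p := by positivity
    nlinarith [mul_le_mul h2 h2 (mul_nonneg hb.le hk) h3, sq_nonneg (t - l * p)]
  nlinarith [mul_le_mul_of_nonneg_right hc1 (sq_nonneg p),
    mul_le_mul_of_nonneg_right hc2 (sq_nonneg k),
    mul_le_mul_of_nonneg_right hεl (sq_nonneg p),
    mul_le_mul_of_nonneg_right hε1 (sq_nonneg t),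
    mul_le_mul_of_nonneg_left hk2 hε0.le]


open ContinuousLinearMap

lemma coercive_aux {H G : Type*}
    [NormedAddCommGroup H] [InnerProductSpace ℂ H] [CompleteSpace H]
    [NormedAddCommGroup G] [InnerProductSpace ℂ G] [CompleteSpace G]
    (M : H →L[ℂ] H) (L : H →L[ℂ] G)
    (hM : Function.Surjective M)
    (hker : LinearMap.ker (M : H →ₗ[ℂ] H) ⊓ LinearMap.ker (L : H →ₗ[ℂ] G) = ⊥)
    (hfd : FiniteDimensional ℂ (LinearMap.ker (M : H →ₗ[ℂ] H))) :
    ∃ c : ℝ, 0 < c ∧ ∀ x : H, c * ‖x‖ ^ 2 ≤ ‖M x‖ ^ 2 + ‖L x‖ ^ 2 := by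
  classical
  set K := LinearMap.ker (M : H →ₗ[ℂ] H) with hK
  haveI : CompleteSpace ↥Kᗮ := K.isClosed_orthogonal.completeSpace_coe
  -- M restricted to Kᗮ is a bijection
  let M' : ↥Kᗮ →L[ℂ] H := M.comp Kᗮ.subtypeL
  have hinj : LinearMap.ker (M' : ↥Kᗮ →ₗ[ℂ] H) = ⊥ := by
    rw [Submodule.eq_bot_iff]
    rintro ⟨x, hx⟩ h0
    have hxK : x ∈ K := by
      simpa [M', hK, LinearMap.mem_ker] using h0
    have : x = 0 := by
      have := Submodule.inner_right_of_mem_orthogonal hxK hx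
      rwa [inner_self_eq_zero] at this
    simpa using this
  have hsurj : LinearMap.range (M' : ↥Kᗮ →ₗ[ℂ] H) = ⊤ := by
    rw [LinearMap.range_eq_top]
    intro y
    obtain ⟨x, hx⟩ := hM y
    refine ⟨⟨x - (K.orthogonalProjection x : H), K.sub_starProjection_mem_orthogonal x⟩, ?_⟩
    have h0 : M ((K.orthogonalProjection x : H)) = 0 := (K.orthogonalProjection x).2
    simp [M', map_sub, h0, hx]
    exact h0
  let e := ContinuousLinearEquiv.ofBijective M' hinj hsurj
  set N : ℝ := ‖(e.symm : H →L[ℂ] ↥Kᗮ)‖ + 1 with hN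
  have hN0 : 0 < N := by positivity
  have hNbnd : ∀ p : ↥Kᗮ, ‖p‖ ≤ N * ‖M (p : H)‖ := by
    intro p
    have h1 : ‖p‖ = ‖e.symm (M' p)‖ := by
      rw [show M' p = e p from rfl, e.symm_apply_apply]
    calc ‖p‖ = ‖e.symm (M' p)‖ := h1
      _ ≤ ‖(e.symm : H →L[ℂ] ↥Kᗮ)‖ * ‖M' p‖ := (e.symm : H →L[ℂ] ↥Kᗮ).le_opNorm _
      _ ≤ N * ‖M (p : H)‖ := by
          apply mul_le_mul_of_nonneg_right _ (norm_nonneg _)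
          simp [hN]
  -- L restricted to K is injective, K finite-dimensional
  let L' : ↥K →ₗ[ℂ] G := (L : H →ₗ[ℂ] G).comp K.subtype
  have hLinj : LinearMap.ker L' = ⊥ := by
    rw [Submodule.eq_bot_iff]
    rintro ⟨x, hx⟩ h0
    have hxL : x ∈ LinearMap.ker (L : H →ₗ[ℂ] G) := by
      simpa [L', LinearMap.mem_ker] using h0
    have : x ∈ LinearMap.ker (M : H →ₗ[ℂ] H) ⊓ LinearMap.ker (L : H →ₗ[ℂ] G) := ⟨hx, hxL⟩
    rw [hker] at this
    simpa using this
  obtain ⟨β, hβ0, hβ⟩ := L'.exists_antilipschitzWith hLinj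
  have hβbnd : ∀ k : ↥K, ‖k‖ ≤ (β : ℝ) * ‖L (k : H)‖ := by
    intro k
    have := hβ.le_mul_dist k 0
    simpa [L', dist_eq_norm] using this
  -- put together
  set a : ℝ := 1 / N with ha'
  set b : ℝ := 1 / (β : ℝ) with hb'
  have ha : (0:ℝ) < a := by positivity
  have hb : (0:ℝ) < b := by
    rw [hb']; positivity
  set ε : ℝ := min 1 (a ^ 2 / (2 * (‖L‖ ^ 2 + 1))) with hε'
  have hε0 : 0 < ε := by
    apply lt_min one_pos
    positivity
  have hε1 : ε ≤ 1 := min_le_left _ _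
  have hεl : ε * ‖L‖ ^ 2 ≤ a ^ 2 / 2 := by
    have h1 : ε ≤ a ^ 2 / (2 * (‖L‖ ^ 2 + 1)) := min_le_right _ _
    have h2 : (0:ℝ) < 2 * (‖L‖ ^ 2 + 1) := by positivity
    rw [le_div_iff₀ h2] at h1
    nlinarith [sq_nonneg ‖L‖, hε0.le]
  refine ⟨min (a ^ 2 / 2) (ε * b ^ 2 / 2), lt_min (by positivity) (by positivity), fun x => ?_⟩
  set k : H := (K.orthogonalProjection x : H) with hk'
  set p : H := x - k with hp'
  have hkK : k ∈ K := (K.orthogonalProjection x).2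
  have hpK : p ∈ Kᗮ := K.sub_starProjection_mem_orthogonal x
  have hxkp : x = k + p := by simp [hp']
  have hpyth : ‖x‖ ^ 2 = ‖k‖ ^ 2 + ‖p‖ ^ 2 := by
    have h0 := Submodule.inner_right_of_mem_orthogonal (𝕜 := ℂ) hkK hpK
    rw [hxkp, @norm_add_sq ℂ _ _ _ _ k p, h0]
    simp
  have hMx : M x = M p := by
    have : M k = 0 := hkK
    rw [hxkp, map_add, this, zero_add]
  have h1 : a * ‖p‖ ≤ ‖M x‖ := by
    have h := hNbnd ⟨p, hpK⟩
    rw [hMx, ha', div_mul_eq_mul_div, div_le_iff₀ hN0, one_mul]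
    calc ‖p‖ ≤ N * ‖M p‖ := h
      _ = ‖M p‖ * N := mul_comm _ _
  have h2 : b * ‖k‖ ≤ ‖L x‖ + ‖L‖ * ‖p‖ := by
    have hk1 : ‖k‖ ≤ (β : ℝ) * ‖L k‖ := hβbnd ⟨k, hkK⟩
    have hk2 : ‖L k‖ ≤ ‖L x‖ + ‖L‖ * ‖p‖ := by
      have : L k = L x - L p := by rw [hxkp]; simp
      rw [this]
      calc ‖L x - L p‖ ≤ ‖L x‖ + ‖L p‖ := norm_sub_le _ _
        _ ≤ ‖L x‖ + ‖L‖ * ‖p‖ := by linarith [L.le_opNorm p]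
    have hβR : (0:ℝ) < (β:ℝ) := by exact_mod_cast hβ0
    have hbk : b * ‖k‖ ≤ ‖L k‖ := by
      rw [hb', div_mul_eq_mul_div, one_mul, div_le_iff₀ hβR]
      calc ‖k‖ ≤ (β:ℝ) * ‖L k‖ := hk1
        _ = ‖L k‖ * (β:ℝ) := mul_comm _ _
    linarith
  rw [hpyth]
  exact real_aux a b ε _ ‖L‖ ‖M x‖ ‖L x‖ ‖k‖ ‖p‖ ha hb hε0 hε1 hεl
    (min_le_left _ _) (min_le_right _ _) (norm_nonneg _) (norm_nonneg _)
    (norm_nonneg _) (norm_nonneg _) (norm_nonneg _) h1 h2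

/-- If `𝐌` is surjective, `ker 𝐌 ∩ ker 𝐋 = {0}` and `ker 𝐌` is finite dimensional, then
`𝐌*𝐌 + 𝐋*𝐋` is invertible and `[[x,y]] = ⟨𝐌x,𝐌y⟩ + ⟨𝐋x,𝐋y⟩` induces a norm equivalent to
the original one. -/
theorem regularized_inner_product_equivalent {H G : Type*}
    [NormedAddCommGroup H] [InnerProductSpace ℂ H] [CompleteSpace H]
    [NormedAddCommGroup G] [InnerProductSpace ℂ G] [CompleteSpace G]
    (M : H →L[ℂ] H) (L : H →L[ℂ] G)
    (hM : Function.Surjective M)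
    (hker : LinearMap.ker (M : H →ₗ[ℂ] H) ⊓ LinearMap.ker (L : H →ₗ[ℂ] G) = ⊥)
    (hfd : FiniteDimensional ℂ (LinearMap.ker (M : H →ₗ[ℂ] H))) :
    (∃ T : H →L[ℂ] H,
      (ContinuousLinearMap.adjoint M ∘L M + ContinuousLinearMap.adjoint L ∘L L) ∘L T =
        ContinuousLinearMap.id ℂ H ∧
      T ∘L (ContinuousLinearMap.adjoint M ∘L M + ContinuousLinearMap.adjoint L ∘L L) =
        ContinuousLinearMap.id ℂ H) ∧
    ∃ c C : ℝ, 0 < c ∧ 0 < C ∧ ∀ x : H,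
      c * ‖x‖ ^ 2 ≤ ‖M x‖ ^ 2 + ‖L x‖ ^ 2 ∧ ‖M x‖ ^ 2 + ‖L x‖ ^ 2 ≤ C * ‖x‖ ^ 2 := by
  obtain ⟨c, hc0, hc⟩ := coercive_aux M L hM hker hfd
  set A : H →L[ℂ] H :=
    ContinuousLinearMap.adjoint M ∘L M + ContinuousLinearMap.adjoint L ∘L L with hA
  have hAinner : ∀ x : H, (inner ℂ (A x) x : ℂ) = (‖M x‖ : ℂ) ^ 2 + (‖L x‖ : ℂ) ^ 2 := by
    intro x
    simp only [hA, ContinuousLinearMap.add_apply, ContinuousLinearMap.comp_apply,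
      inner_add_left, ContinuousLinearMap.adjoint_inner_left, inner_self_eq_norm_sq_to_K]
    norm_cast
  have hAre : ∀ x : H, RCLike.re (inner ℂ (A x) x : ℂ) = ‖M x‖ ^ 2 + ‖L x‖ ^ 2 := by
    intro x
    rw [hAinner x]
    simp [← Complex.ofReal_pow]
  have hAlow : ∀ x : H, c * ‖x‖ ^ 2 ≤ ‖A x‖ * ‖x‖ := by
    intro x
    calc c * ‖x‖ ^ 2 ≤ ‖M x‖ ^ 2 + ‖L x‖ ^ 2 := hc x
      _ = RCLike.re (inner ℂ (A x) x : ℂ) := (hAre x).symm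
      _ ≤ ‖(inner ℂ (A x) x : ℂ)‖ := RCLike.re_le_norm _
      _ ≤ ‖A x‖ * ‖x‖ := norm_inner_le_norm _ _
  have hAanti : ∀ x : H, c * ‖x‖ ≤ ‖A x‖ := by
    intro x
    rcases eq_or_ne x 0 with rfl | hx
    · simp
    · have h0 : 0 < ‖x‖ := norm_pos_iff.mpr hx
      have := hAlow x
      rw [pow_two, ← mul_assoc] at this
      exact le_of_mul_le_mul_right this h0
  have hAinj : LinearMap.ker (A : H →ₗ[ℂ] H) = ⊥ := by
    rw [Submodule.eq_bot_iff]
    intro x hx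
    rw [LinearMap.mem_ker, ContinuousLinearMap.coe_coe] at hx
    have := hAanti x
    rw [hx, norm_zero] at this
    have : ‖x‖ ≤ 0 := by
      by_contra h
      push_neg at h
      nlinarith
    simpa using le_antisymm this (norm_nonneg x)
  have hAclosed : IsClosed (Set.range A) := by
    have hanti : AntilipschitzWith (⟨c, hc0.le⟩ : NNReal)⁻¹ A := by
      apply ContinuousLinearMap.antilipschitz_of_bound
      intro x
      show ‖x‖ ≤ c⁻¹ * ‖A x‖
      rw [inv_mul_eq_div, le_div_iff₀ hc0]
      calc ‖x‖ * c = c * ‖x‖ := mul_comm _ _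
        _ ≤ ‖A x‖ := hAanti x
    exact (hanti.isClosedEmbedding A.uniformContinuous).isClosed_range
  haveI : CompleteSpace ↥(LinearMap.range (A : H →ₗ[ℂ] H)) := by
    have : (LinearMap.range (A : H →ₗ[ℂ] H) : Set H) = Set.range A := by
      ext y; simp [LinearMap.mem_range]
    rw [show ((LinearMap.range (A : H →ₗ[ℂ] H) : Submodule ℂ H) : Set H) = Set.range A from this] at *
    exact hAclosed.completeSpace_coe
  have hAsurj : LinearMap.range (A : H →ₗ[ℂ] H) = ⊤ := by
    rw [← Submodule.orthogonal_eq_bot_iff]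
    rw [Submodule.eq_bot_iff]
    intro x hx
    have h0 : (inner ℂ (A x) x : ℂ) = 0 :=
      hx (A x) (LinearMap.mem_range_self (A : H →ₗ[ℂ] H) x)
    have h1 : ‖M x‖ ^ 2 + ‖L x‖ ^ 2 = 0 := by
      have := hAre x
      rw [h0] at this
      simpa using this.symm
    have h2 : c * ‖x‖ ^ 2 ≤ 0 := h1 ▸ hc x
    have h3 : ‖x‖ = 0 := by
      by_contra h
      have h' : 0 < ‖x‖ := lt_of_le_of_ne (norm_nonneg x) (Ne.symm h)
      nlinarith [mul_pos hc0 (pow_pos h' 2)]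
    simpa using h3
  let e := ContinuousLinearEquiv.ofBijective A hAinj hAsurj
  constructor
  · refine ⟨(e.symm : H →L[ℂ] H), ?_, ?_⟩
    · ext x
      exact e.apply_symm_apply x
    · ext x
      exact e.symm_apply_apply x
  · refine ⟨c, ‖M‖ ^ 2 + ‖L‖ ^ 2 + 1, hc0, by positivity, fun x => ⟨hc x, ?_⟩⟩
    have h1 : ‖M x‖ ≤ ‖M‖ * ‖x‖ := M.le_opNorm x
    have h2 : ‖L x‖ ≤ ‖L‖ * ‖x‖ := L.le_opNorm x
    nlinarith [norm_nonneg x, norm_nonneg (M x), norm_nonneg (L x),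
      norm_nonneg M, norm_nonneg L, sq_nonneg ‖x‖]
end
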